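/- Let k ≥ 1 and let r, m be natural numbers with 2^r ≤ (2^k − 1)^m. Then there exists an injective function from the set of binary strings of length r (functions Fin r → Bool) into the set of binary strings of length m·k that contain no contiguous run of 2k − 1 consecutive zeros (no contiguous substring equal to replicate (2k − 1) false). -/
import Mathlib

section Aux

variable (k m : ℕ)

/-- value of block `j`, a number in `[1, 2^k-1]`. -/
def stmt9V (d : Fin m → Fin (2 ^ k - 1)) (j : ℕ) : ℕ :=
  if h : j < m then (d ⟨j, h⟩).val + 1 else 1

/-- concatenation of the `k`-bit blocks. -/
def stmt9g (d : Fin m → Fin (2 ^ k - 1)) : List Bool :=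
  List.ofFn (fun i : Fin (m * k) => Nat.testBit (stmt9V k m d (i / k)) (i % k))

lemma stmt9V_pos (d : Fin m → Fin (2 ^ k - 1)) (j : ℕ) : 1 ≤ stmt9V k m d j := by
  unfold stmt9V; split <;> omega

lemma stmt9V_lt (hk : 1 ≤ k) (d : Fin m → Fin (2 ^ k - 1)) (j : ℕ) :
    stmt9V k m d j < 2 ^ k := by
  have h2 : 1 ≤ 2 ^ k - 1 := by
    have : 2 ^ 1 ≤ 2 ^ k := Nat.pow_le_pow_right (by norm_num) hk
    omega
  unfold stmt9V; split
  · have := (d ⟨_, ‹_›⟩).isLt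
    omega
  · omega

lemma stmt9g_inj (hk : 1 ≤ k) : Function.Injective (stmt9g k m) := by
  intro d1 d2 hge
  have hfn := List.ofFn_injective hge
  have hV : ∀ j < m, stmt9V k m d1 j = stmt9V k m d2 j := by
    intro j hj
    apply Nat.eq_of_testBit_eq
    intro i
    by_cases hik : i < k
    · have hidx : k * j + i < m * k := by
        calc k * j + i < k * j + k := by omega
          _ = k * (j + 1) := by ring
          _ ≤ k * m := Nat.mul_le_mul_left k hj
          _ = m * k := Nat.mul_comm k m
      have := congrFun hfn ⟨k * j + i, hidx⟩
      simpa [Nat.mul_add_div (by omega : 0 < k), Nat.mul_add_mod,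
        Nat.div_eq_of_lt hik, Nat.mod_eq_of_lt hik] using this
    · have hik' : k ≤ i := Nat.le_of_not_lt hik
      have b1 := Nat.testBit_lt_two_pow (lt_of_lt_of_le (stmt9V_lt k m hk d1 j)
        (Nat.pow_le_pow_right (by norm_num) hik'))
      have b2 := Nat.testBit_lt_two_pow (lt_of_lt_of_le (stmt9V_lt k m hk d2 j)
        (Nat.pow_le_pow_right (by norm_num) hik'))
      rw [b1, b2]
  funext j
  have := hV j j.isLt
  unfold stmt9V at this
  rw [dif_pos j.isLt, dif_pos j.isLt] at this
  simp only [Fin.eta] at this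
  exact Fin.ext (by omega)

lemma stmt9g_norun (hk : 1 ≤ k) (d : Fin m → Fin (2 ^ k - 1)) (p : ℕ) :
    ((stmt9g k m d).drop p).take (2 * k - 1) ≠ List.replicate (2 * k - 1) false := by
  intro heq
  have hlen : (stmt9g k m d).length = m * k := by simp [stmt9g]
  have hlen2 := congrArg List.length heq
  simp [hlen] at hlen2
  -- so p + (2k-1) ≤ m*k
  have hpk : p + (2 * k - 1) ≤ m * k := by omega
  set b := (p + (k - 1)) / k with hb
  have hdm := Nat.div_add_mod (p + (k - 1)) k
  rw [← hb] at hdm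
  have hrem : (p + (k - 1)) % k < k := Nat.mod_lt _ (by omega)
  have hb1 : p ≤ k * b := by omega
  have hb2 : k * b ≤ p + (k - 1) := by omega
  have hbm : b < m := by
    have h1 : k * (b + 1) ≤ k * m := by
      rw [Nat.mul_add, Nat.mul_one, Nat.mul_comm k m]
      omega
    have := Nat.le_of_mul_le_mul_left h1 (by omega : 0 < k)
    omega
  have hzero : stmt9V k m d b = 0 := by
    apply Nat.eq_of_testBit_eq
    intro i
    rw [Nat.zero_testBit]
    by_cases hik : i < k
    · have hq : k * b + i < m * k := by
        calc k * b + i < k * b + k := by omega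
          _ = k * (b + 1) := by ring
          _ ≤ k * m := Nat.mul_le_mul_left k hbm
          _ = m * k := Nat.mul_comm k m
      have hsub : k * b + i - p < 2 * k - 1 := by omega
      have hbound : k * b + i - p <
          (((stmt9g k m d).drop p).take (2 * k - 1)).length := by
        simp [hlen]; omega
      have h1 : (((stmt9g k m d).drop p).take (2 * k - 1))[k * b + i - p]'hbound
          = false := by
        rw [List.getElem_of_eq heq]; simp
      rw [List.getElem_take, List.getElem_drop] at h1
      have hpq : p + (k * b + i - p) = k * b + i := by omega
      simp only [hpq] at h1
      simp only [stmt9g, List.getElem_ofFn] at h1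
      simpa [Nat.mul_add_div (by omega : 0 < k), Nat.mul_add_mod,
        Nat.div_eq_of_lt hik, Nat.mod_eq_of_lt hik] using h1
    · exact Nat.testBit_lt_two_pow (lt_of_lt_of_le (stmt9V_lt k m hk d b)
        (Nat.pow_le_pow_right (by norm_num) (Nat.le_of_not_lt hik)))
  have := stmt9V_pos k m d b
  omega

end Aux

/-- If `2^r ≤ (2^k - 1)^m` (with `k ≥ 1`), there is an injection from binary
strings of length `r` into binary strings of length `m·k` containing no
contiguous run of `2k - 1` zeros. -/
theorem stmt_9 (k : ℕ) (hk : 1 ≤ k) (r m : ℕ)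
    (h : 2 ^ r ≤ (2 ^ k - 1) ^ m) :
    ∃ f : (Fin r → Bool) →
        {z : List Bool // z.length = m * k ∧
          ∀ p : ℕ,
            (z.drop p).take (2 * k - 1) ≠ List.replicate (2 * k - 1) false},
      Function.Injective f := by
  have hcard : Fintype.card (Fin r → Bool) ≤ Fintype.card (Fin m → Fin (2 ^ k - 1)) := by
    simpa [Fintype.card_fun] using h
  obtain ⟨e⟩ := Function.Embedding.nonempty_of_card_le hcard
  refine ⟨fun x => ⟨stmt9g k m (e x), by simp [stmt9g], fun p => stmt9g_norun k m hk (e x) p⟩, ?_⟩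
  intro x y hxy
  exact e.injective (stmt9g_inj k m hk (Subtype.ext_iff.mp hxy))
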